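/- arXiv:1907.06951 — 2 statements merged into one kernel-verified Lean document; each statement's English description precedes it below -/
import Mathlib

section
/- For n ≥ 3, let M_0 be the set of edges of FQ_n joining vertices that differ exactly in coordinate n−1 (the (n−1)-th direction hypercube edges). Then FQ_n − M_0 is isomorphic to Q_n, via the map fixing vertices with (n−1)-th coordinate 0 and sending (x_1,...,x_{n−2},1,j) to (x̄_1,...,x̄_{n−2},1,j̄). -/
open SimpleGraph

def cmpl {n : ℕ} (x : Fin n → Bool) : Fin n → Bool := fun i => !x i

/-- The `n`-dimensional hypercube on vertex set `{0,1}^n`. -/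
def Q (n : ℕ) : SimpleGraph (Fin n → Bool) where
  Adj x y := hammingDist x y = 1
  symm := ⟨fun x y h => (hammingDist_comm y x).trans h⟩
  loopless := ⟨fun x h => by simp [hammingDist_self] at h⟩

/-- The folded hypercube: `Q n` plus all complement edges. -/
def FQ (n : ℕ) : SimpleGraph (Fin n → Bool) where
  Adj x y := hammingDist x y = 1 ∨ (x ≠ y ∧ y = cmpl x)
  symm := by
    refine ⟨fun x y h => ?_⟩
    rcases h with h | ⟨hne, he⟩
    · exact Or.inl ((hammingDist_comm y x).trans h)
    · refine Or.inr ⟨hne.symm, ?_⟩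
      subst he; funext i; simp [cmpl]
  loopless := by
    refine ⟨fun x h => ?_⟩
    rcases h with h | ⟨hne, _⟩
    · simp [hammingDist_self] at h
    · exact hne rfl

/-- The set of hypercube edges in coordinate direction `j`. -/
def Mdir (n : ℕ) (j : Fin n) : Set (Sym2 (Fin n → Bool)) :=
  {e | ∃ x, e = s(x, Function.update x j (!x j))}

/-- The set of complement edges. -/
def M2 (n : ℕ) : Set (Sym2 (Fin n → Bool)) := {e | ∃ x, e = s(x, cmpl x)}

/-- `M` is a perfect matching of `G`: a set of edges of `G` such that every
vertex lies in exactly one edge of `M`. -/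
def IsPerfectMatchingSet {V : Type*} (G : SimpleGraph V) (M : Set (Sym2 V)) : Prop :=
  M ⊆ G.edgeSet ∧ ∀ v : V, ∃! e, e ∈ M ∧ v ∈ e


namespace Stmt5Aux

variable {n : ℕ}

def psi (j : Fin n) (x : Fin n → Bool) : Fin n → Bool :=
  fun i => if x j = true ∧ i ≠ j then !x i else x i

lemma psi_apply_j (j : Fin n) (x : Fin n → Bool) : psi j x j = x j := by simp [psi]

lemma psi_invol (j : Fin n) (x : Fin n → Bool) : psi j (psi j x) = x := by
  funext i
  by_cases hij : i = j
  · subst hij; simp [psi]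
  · by_cases hx : x j = true <;> simp [psi, hij, hx]

lemma ham_one_iff (x y : Fin n → Bool) :
    hammingDist x y = 1 ↔ ∃ i, y = Function.update x i (!x i) := by
  constructor
  · intro h
    rw [hammingDist, Finset.card_eq_one] at h
    obtain ⟨i, hi⟩ := h
    refine ⟨i, funext fun k => ?_⟩
    by_cases hk : k = i
    · subst hk
      have hmem : k ∈ Finset.univ.filter fun i => x i ≠ y i := by
        rw [hi]; exact Finset.mem_singleton_self k
      rw [Finset.mem_filter] at hmem
      have := hmem.2
      rw [Function.update_self]
      cases hx : x k <;> cases hy : y k <;> simp_all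
    · have hxy : x k = y k := by
        by_contra hne
        have : k ∈ ({i} : Finset (Fin n)) := by
          rw [← hi, Finset.mem_filter]; exact ⟨Finset.mem_univ _, hne⟩
        simp [hk] at this
      rw [Function.update_of_ne hk]; exact hxy.symm
  · rintro ⟨i, rfl⟩
    rw [hammingDist, Finset.card_eq_one]
    refine ⟨i, ?_⟩
    ext k
    by_cases hk : k = i
    · subst hk; simp [Function.update_self]
    · simp [Function.update_of_ne hk, hk]

lemma mem_Mdir_iff {j : Fin n} {x y : Fin n → Bool} :
    s(x, y) ∈ Mdir n j ↔ y = Function.update x j (!x j) := by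
  constructor
  · rintro ⟨u, hu⟩
    rw [Sym2.eq_iff] at hu
    rcases hu with ⟨rfl, rfl⟩ | ⟨rfl, rfl⟩
    · rfl
    · funext k
      by_cases hk : k = j
      · subst hk; simp [Function.update_self]
      · simp [Function.update_of_ne hk]
  · rintro rfl; exact ⟨x, rfl⟩

lemma forward (j : Fin n) (hn : 2 ≤ n) {x y : Fin n → Bool}
    (h : hammingDist x y = 1) :
    ((FQ n).deleteEdges (Mdir n j)).Adj (psi j x) (psi j y) := by
  obtain ⟨i, rfl⟩ := (ham_one_iff x _).mp h
  rw [SimpleGraph.deleteEdges_adj]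
  by_cases hij : i = j
  · -- the edge flips coordinate j; image is a complement edge
    subst hij
    have hc : psi i (Function.update x i (!x i)) = cmpl (psi i x) := by
      funext k
      simp only [psi, cmpl, Function.update_apply]
      by_cases hk : k = i <;> by_cases hx : x i = true <;> simp_all
    rw [hc]
    have hne : psi i x ≠ cmpl (psi i x) := by
      intro hcontra
      have := congrFun hcontra i
      simp [cmpl] at this
    refine ⟨Or.inr ⟨hne, rfl⟩, ?_⟩
    intro hmem
    rw [mem_Mdir_iff] at hmem
    have : Nontrivial (Fin n) := Fin.nontrivial_iff_two_le.mpr hn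
    obtain ⟨k, hk⟩ := exists_ne i
    have := congrFun hmem k
    rw [Function.update_of_ne hk] at this
    simp [cmpl] at this
  · -- coordinate j unchanged; image is a hypercube edge in direction i
    have hc : psi j (Function.update x i (!x i)) =
        Function.update (psi j x) i (!(psi j x i)) := by
      funext k
      have hji : ¬j = i := fun h => hij h.symm
      simp only [psi, Function.update_apply]
      by_cases hk : k = i <;> by_cases hkj : k = j <;>
        by_cases hx : x j = true <;> simp_all
    rw [hc]
    refine ⟨Or.inl ((ham_one_iff _ _).mpr ⟨i, rfl⟩), ?_⟩
    intro hmem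
    rw [mem_Mdir_iff] at hmem
    have h1 := congrFun hmem j
    rw [Function.update_of_ne (Ne.symm hij), Function.update_self] at h1
    simp at h1

lemma backward (j : Fin n) {x y : Fin n → Bool}
    (h : ((FQ n).deleteEdges (Mdir n j)).Adj x y) :
    hammingDist (psi j x) (psi j y) = 1 := by
  rw [SimpleGraph.deleteEdges_adj] at h
  obtain ⟨hadj, hmem⟩ := h
  rcases hadj with h1 | ⟨hne, rfl⟩
  · obtain ⟨i, rfl⟩ := (ham_one_iff x _).mp h1
    have hij : i ≠ j := by
      rintro rfl
      exact hmem (mem_Mdir_iff.mpr rfl)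
    have hc : psi j (Function.update x i (!x i)) =
        Function.update (psi j x) i (!(psi j x i)) := by
      funext k
      have hji : ¬j = i := fun h => hij h.symm
      simp only [psi, Function.update_apply]
      by_cases hk : k = i <;> by_cases hkj : k = j <;>
        by_cases hx : x j = true <;> simp_all
    rw [hc]
    exact (ham_one_iff _ _).mpr ⟨i, rfl⟩
  · -- complement edge maps to an edge in direction j
    have hc : psi j (cmpl x) = Function.update (psi j x) j (!(psi j x j)) := by
      funext k
      simp only [psi, cmpl, Function.update_apply]
      by_cases hk : k = j <;> by_cases hx : x j = true <;> simp_all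
    rw [hc]
    exact (ham_one_iff _ _).mpr ⟨j, rfl⟩

end Stmt5Aux

/-- `FQ n − M₀` is isomorphic to `Q n` via the map fixing vertices whose `(n-1)`-th coordinate
is `0` and complementing all other coordinates of vertices whose `(n-1)`-th coordinate is `1`. -/
theorem stmt5 (n : ℕ) (hn : 3 ≤ n) :
    ∃ φ : Q n ≃g (FQ n).deleteEdges (Mdir n ⟨n - 2, by omega⟩),
      ∀ x : Fin n → Bool,
        φ x = fun i => if x ⟨n - 2, by omega⟩ = true ∧ i ≠ ⟨n - 2, by omega⟩ then !x i else x i := by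
  classical
  have h2 : 2 ≤ n := by omega
  refine ⟨⟨⟨Stmt5Aux.psi ⟨n - 2, by omega⟩, Stmt5Aux.psi ⟨n - 2, by omega⟩,
    Stmt5Aux.psi_invol _, Stmt5Aux.psi_invol _⟩, ?_⟩, fun x => rfl⟩
  intro x y
  constructor
  · intro h
    have := Stmt5Aux.backward ⟨n - 2, by omega⟩ h
    simp only [Equiv.coe_fn_mk] at this
    rwa [Stmt5Aux.psi_invol, Stmt5Aux.psi_invol] at this
  · intro h
    exact Stmt5Aux.forward _ h2 h
end

section
/- For n ≥ 2, the map f : {0,1}^n → {0,1}^n fixing vertices with last coordinate 0 and sending (x,1) to (x̄,1) (complementing the first n−1 coordinates) is an involution that maps the edge set of Q_n bijectively onto the edge set of FQ_n − M_1, exchanging the cross edges of M_1 with the complement edges M_2. -/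
open SimpleGraph

lemma ham_update {n : ℕ} (x : Fin n → Bool) (i : Fin n) :
    hammingDist x (Function.update x i (!x i)) = 1 := by
  have hfil : (Finset.univ.filter fun k => x k ≠ Function.update x i (!x i) k) = {i} := by
    ext k
    simp only [Finset.mem_filter, Finset.mem_univ, true_and, Finset.mem_singleton]
    constructor
    · intro h
      by_contra hk
      rw [Function.update_of_ne hk] at h
      exact h rfl
    · rintro rfl
      simp
  show (Finset.univ.filter fun k => x k ≠ Function.update x i (!x i) k).card = 1
  rw [hfil, Finset.card_singleton]

lemma ham_one {n : ℕ} {x y : Fin n → Bool} (h : hammingDist x y = 1) :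
    ∃ i, y = Function.update x i (!x i) := by
  have hd : (Finset.univ.filter fun k => x k ≠ y k).card = 1 := h
  rw [Finset.card_eq_one] at hd
  obtain ⟨i, hi⟩ := hd
  have hmem : ∀ k : Fin n, (x k ≠ y k) ↔ k = i := by
    intro k
    rw [← Finset.mem_singleton, ← hi]
    simp
  refine ⟨i, funext fun k => ?_⟩
  by_cases hk : k = i
  · subst hk
    have h1 : x k ≠ y k := (hmem k).mpr rfl
    rw [Function.update_self]
    cases hxy : x k <;> cases hxy2 : y k <;> simp_all
  · rw [Function.update_of_ne hk]
    have h1 : ¬ (x k ≠ y k) := fun h' => hk ((hmem k).mp h')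
    push_neg at h1
    exact h1.symm

lemma aux_main (n : ℕ) (hn : 2 ≤ n) (j : Fin n) (hj : (j : ℕ) = n - 1)
    (f : (Fin n → Bool) → (Fin n → Bool))
    (hf : ∀ (x : Fin n → Bool) (i : Fin n),
      f x i = if x j = true ∧ (i : ℕ) < n - 1 then !x i else x i) :
    (∀ x, f (f x) = x) ∧
    Set.BijOn (Sym2.map f) ((Q n).edgeSet)
      (((FQ n).deleteEdges (Mdir n j)).edgeSet) ∧
    Sym2.map f '' (Mdir n j) = M2 n ∧
    Sym2.map f '' (M2 n) = Mdir n j := by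
  have bfalse : ∀ b : Bool, b ≠ true → b = false := fun b => by cases b <;> simp
  have hne_j : ∀ i : Fin n, i ≠ j → (i : ℕ) < n - 1 := by
    intro i hi
    have h1 : (i : ℕ) ≠ n - 1 := fun h => hi (Fin.ext (h.trans hj.symm))
    have := i.isLt
    omega
  set i0 : Fin n := ⟨0, by omega⟩ with hi0def
  have hi0 : i0 ≠ j := by
    intro h
    have : (i0 : ℕ) = (j : ℕ) := by rw [h]
    simp [hi0def, hj] at this
    omega
  have hfj : ∀ x, f x j = x j := by
    intro x
    rw [hf, if_neg]
    rintro ⟨-, h2⟩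
    omega
  have hf_false : ∀ x, x j = false → f x = x := by
    intro x hx
    funext i
    rw [hf, if_neg]
    rintro ⟨h1, -⟩
    rw [hx] at h1
    exact Bool.false_ne_true h1
  have hf_true : ∀ x (i : Fin n), x j = true → (i : ℕ) < n - 1 → f x i = !x i := by
    intro x i hx hi
    rw [hf, if_pos ⟨hx, hi⟩]
  have hinv : ∀ x, f (f x) = x := by
    intro x
    by_cases hx : x j = true
    · funext i
      by_cases hi : (i : ℕ) < n - 1
      · have hfxj : f x j = true := (hfj x).trans hx
        rw [hf_true _ _ hfxj hi, hf_true _ _ hx hi, Bool.not_not]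
      · rw [hf, if_neg (fun h => hi h.2), hf, if_neg (fun h => hi h.2)]
    · have hx' : x j = false := bfalse _ hx
      rw [hf_false x hx', hf_false x hx']
  have finj : Function.Injective f := fun a b h => by rw [← hinv a, h, hinv]
  -- computations
  have hupd_j : ∀ x, x j = false → f (Function.update x j true) = cmpl x := by
    intro x hx
    funext i
    by_cases hi : (i : ℕ) < n - 1
    · have hij : i ≠ j := by
        intro h
        rw [h, hj] at hi
        omega
      rw [hf_true _ _ (by rw [Function.update_self]) hi, Function.update_of_ne hij]
      rfl
    · have hij : i = j := Fin.ext (by have := i.isLt; omega)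
      subst hij
      rw [hf, if_neg (fun h => hi h.2), Function.update_self]
      simp [cmpl, hx]
  have hcmpl_upd : ∀ x, x j = false → f (cmpl x) = Function.update x j true := by
    intro x hx
    funext i
    have hcj : cmpl x j = true := by simp [cmpl, hx]
    by_cases hi : (i : ℕ) < n - 1
    · have hij : i ≠ j := by
        intro h
        rw [h, hj] at hi
        omega
      rw [hf_true _ _ hcj hi, Function.update_of_ne hij]
      simp [cmpl]
    · have hij : i = j := Fin.ext (by have := i.isLt; omega)
      subst hij
      rw [hf, if_neg (fun h => hi h.2), Function.update_self, hcj]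
  have hcan : ∀ x, x j = true → f x = cmpl (Function.update x j false) := by
    intro x hx
    funext i
    by_cases hi : (i : ℕ) < n - 1
    · have hij : i ≠ j := by
        intro h
        rw [h, hj] at hi
        omega
      rw [hf_true _ _ hx hi]
      simp [cmpl, Function.update_of_ne hij]
    · have hij : i = j := Fin.ext (by have := i.isLt; omega)
      subst hij
      rw [hfj, hx]
      simp [cmpl]
  have hupd_ne : ∀ x (i : Fin n), x j = true → (i : ℕ) < n - 1 →
      f (Function.update x i (!x i)) = Function.update (f x) i (!(f x i)) := by
    intro x i hx hi
    have hij : i ≠ j := by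
      intro h
      rw [h, hj] at hi
      omega
    have hyj : Function.update x i (!x i) j = true := by
      rw [Function.update_of_ne (Ne.symm hij)]
      exact hx
    funext k
    by_cases hk : (k : ℕ) < n - 1
    · rw [hf_true _ _ hyj hk]
      by_cases hki : k = i
      · subst hki
        rw [Function.update_self, Function.update_self, Bool.not_not, hf_true _ _ hx hk,
          Bool.not_not]
      · rw [Function.update_of_ne hki, Function.update_of_ne hki, hf_true _ _ hx hk]
    · have hkj : k = j := Fin.ext (by have := k.isLt; omega)
      subst hkj
      rw [hfj, Function.update_of_ne (Ne.symm hij), Function.update_of_ne (Ne.symm hij), hfj]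
  have hcc : ∀ x : Fin n → Bool, cmpl (cmpl x) = x := by
    intro x; funext k; simp [cmpl]
  have mem_mdir : ∀ x y : Fin n → Bool,
      s(x, y) ∈ Mdir n j ↔ y = Function.update x j (!x j) := by
    intro x y
    constructor
    · rintro ⟨a, ha⟩
      rw [Sym2.eq_iff] at ha
      rcases ha with ⟨rfl, h2⟩ | ⟨h1, rfl⟩
      · exact h2
      · subst h1
        funext k
        by_cases hk : k = j <;> simp [hk, Function.update]
    · rintro rfl
      exact ⟨x, rfl⟩
  have hne_cmpl : ∀ x : Fin n → Bool, x ≠ cmpl x := by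
    intro x h
    have := congrFun h i0
    simp [cmpl] at this
  have not_mdir_cmpl : ∀ x : Fin n → Bool, s(x, cmpl x) ∉ Mdir n j := by
    intro x hmem
    rw [mem_mdir] at hmem
    have h := congrFun hmem i0
    rw [Function.update_of_ne hi0] at h
    simp [cmpl] at h
  have not_mdir_upd : ∀ (x : Fin n → Bool) (i : Fin n), i ≠ j →
      s(x, Function.update x i (!x i)) ∉ Mdir n j := by
    intro x i hij hmem
    rw [mem_mdir] at hmem
    have h := congrFun hmem i
    rw [Function.update_self, Function.update_of_ne hij] at h
    simp at h
  -- Claim A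
  have claimA : ∀ x y : Fin n → Bool, (Q n).Adj x y →
      (FQ n).Adj (f x) (f y) ∧ s(f x, f y) ∉ Mdir n j := by
    intro x y hxy
    have hxy' : hammingDist x y = 1 := hxy
    obtain ⟨i, rfl⟩ := ham_one hxy'
    by_cases hij : i = j
    · subst hij
      by_cases hx : x i = true
      · have hxj : (!x i) = false := by rw [hx]; rfl
        rw [hxj, hf_false _ (Function.update_self _ _ _), hcan x hx]
        constructor
        · exact (FQ n).symm.symm _ _ (Or.inr ⟨hne_cmpl _, rfl⟩)
        · rw [Sym2.eq_swap]
          exact not_mdir_cmpl _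
      · have hx' : x i = false := bfalse _ hx
        have hxj : (!x i) = true := by rw [hx']; rfl
        rw [hxj, hf_false x hx', hupd_j x hx']
        exact ⟨Or.inr ⟨hne_cmpl x, rfl⟩, not_mdir_cmpl x⟩
    · have hi : (i : ℕ) < n - 1 := hne_j i hij
      by_cases hx : x j = true
      · rw [hupd_ne x i hx hi]
        exact ⟨Or.inl (ham_update _ _), not_mdir_upd _ _ hij⟩
      · have hx' : x j = false := bfalse _ hx
        have hyj : Function.update x i (!x i) j = false := by
          rw [Function.update_of_ne (Ne.symm hij)]
          exact hx'
        rw [hf_false x hx', hf_false _ hyj]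
        exact ⟨Or.inl (ham_update x i), not_mdir_upd x i hij⟩
  -- Claim B
  have claimB : ∀ x y : Fin n → Bool, (FQ n).Adj x y → s(x, y) ∉ Mdir n j →
      (Q n).Adj (f x) (f y) := by
    intro x y hadj hnm
    have hadj' : hammingDist x y = 1 ∨ (x ≠ y ∧ y = cmpl x) := hadj
    rcases hadj' with h1 | ⟨hne, rfl⟩
    · obtain ⟨i, rfl⟩ := ham_one h1
      by_cases hij : i = j
      · exact absurd ((mem_mdir x _).mpr (by rw [hij])) hnm
      · have hi : (i : ℕ) < n - 1 := hne_j i hij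
        by_cases hx : x j = true
        · rw [hupd_ne x i hx hi]
          exact ham_update _ _
        · have hx' : x j = false := bfalse _ hx
          have hyj : Function.update x i (!x i) j = false := by
            rw [Function.update_of_ne (Ne.symm hij)]
            exact hx'
          rw [hf_false x hx', hf_false _ hyj]
          exact ham_update x i
    · by_cases hx : x j = true
      · have hyj : cmpl x j = false := by simp [cmpl, hx]
        have hfx : f x = Function.update (cmpl x) j true := by
          have h := hcmpl_upd (cmpl x) hyj
          rw [hcc] at h
          exact h
        rw [hf_false _ hyj, hfx]
        show hammingDist _ _ = 1
        rw [hammingDist_comm]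
        simpa [hyj] using ham_update (cmpl x) j
      · have hx' : x j = false := bfalse _ hx
        rw [hf_false x hx', hcmpl_upd x hx']
        show hammingDist _ _ = 1
        simpa [hx'] using ham_update x j
  have hmapinv : ∀ e : Sym2 (Fin n → Bool), Sym2.map f (Sym2.map f e) = e := by
    intro e
    induction e using Sym2.ind with
    | _ x y => rw [Sym2.map_pair_eq, Sym2.map_pair_eq, hinv, hinv]
  have mapsto : Set.MapsTo (Sym2.map f) ((Q n).edgeSet)
      (((FQ n).deleteEdges (Mdir n j)).edgeSet) := by
    intro e
    induction e using Sym2.ind with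
    | _ x y =>
      intro he
      rw [SimpleGraph.mem_edgeSet] at he
      rw [Sym2.map_pair_eq, SimpleGraph.mem_edgeSet, SimpleGraph.deleteEdges_adj]
      exact claimA x y he
  have mapsto' : Set.MapsTo (Sym2.map f) (((FQ n).deleteEdges (Mdir n j)).edgeSet)
      ((Q n).edgeSet) := by
    intro e
    induction e using Sym2.ind with
    | _ x y =>
      intro he
      rw [SimpleGraph.mem_edgeSet, SimpleGraph.deleteEdges_adj] at he
      rw [Sym2.map_pair_eq, SimpleGraph.mem_edgeSet]
      exact claimB x y he.1 he.2
  have im1 : Sym2.map f '' (Mdir n j) = M2 n := by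
    ext e
    simp only [Set.mem_image]
    constructor
    · rintro ⟨e', ⟨a, rfl⟩, rfl⟩
      rw [Sym2.map_pair_eq]
      by_cases ha : a j = true
      · have h1 : (!a j) = false := by rw [ha]; rfl
        rw [h1, hf_false _ (Function.update_self _ _ _), hcan a ha]
        exact ⟨Function.update a j false, Sym2.eq_swap⟩
      · have ha' : a j = false := bfalse _ ha
        have h1 : (!a j) = true := by rw [ha']; rfl
        rw [h1, hf_false a ha', hupd_j a ha']
        exact ⟨a, rfl⟩
    · rintro ⟨a, rfl⟩
      by_cases ha : a j = true
      · have hcj : cmpl a j = false := by simp [cmpl, ha]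
        refine ⟨s(cmpl a, Function.update (cmpl a) j true), ⟨cmpl a, by simp [hcj]⟩, ?_⟩
        rw [Sym2.map_pair_eq, hf_false _ hcj, hupd_j _ hcj, hcc]
        exact Sym2.eq_swap
      · have ha' : a j = false := bfalse _ ha
        refine ⟨s(a, Function.update a j true), ⟨a, by simp [ha']⟩, ?_⟩
        rw [Sym2.map_pair_eq, hf_false a ha', hupd_j a ha']
  have im2 : Sym2.map f '' (M2 n) = Mdir n j := by
    have h1 : Sym2.map f '' (M2 n) = Sym2.map f '' (Sym2.map f '' (Mdir n j)) := by rw [im1]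
    rw [h1, ← Set.image_comp]
    have hcomp : Sym2.map f ∘ Sym2.map f = id := funext hmapinv
    rw [hcomp, Set.image_id]
  refine ⟨hinv, ⟨mapsto, (Sym2.map.injective finj).injOn, ?_⟩, im1, im2⟩
  intro e he
  exact ⟨Sym2.map f e, mapsto' he, hmapinv e⟩

/-- The map fixing the `0`-half and complementing the first `n-1` coordinates on the `1`-half
is an involution carrying the edge set of `Q n` bijectively onto that of `FQ n − M₁`,
exchanging the cross edges `M₁` with the complement edges `M₂`. -/
theorem stmt18 (n : ℕ) (hn : 2 ≤ n)
    (f : (Fin n → Bool) → (Fin n → Bool))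
    (hf : ∀ (x : Fin n → Bool) (i : Fin n),
      f x i = if x ⟨n - 1, by omega⟩ = true ∧ (i : ℕ) < n - 1 then !x i else x i) :
    (∀ x, f (f x) = x) ∧
    Set.BijOn (Sym2.map f) ((Q n).edgeSet)
      (((FQ n).deleteEdges (Mdir n ⟨n - 1, by omega⟩)).edgeSet) ∧
    Sym2.map f '' (Mdir n ⟨n - 1, by omega⟩) = M2 n ∧
    Sym2.map f '' (M2 n) = Mdir n ⟨n - 1, by omega⟩ := by
  exact aux_main n hn ⟨n - 1, by omega⟩ rfl f hf
end
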